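/- Fix c > 0. For x₁ > 0 define Z₄(t,x,y) = (t/(x₁y₁))·(log(x₁/y₁))^{-5/2}·exp(-c t²/log(x₁/y₁))·exp(-c|y'|²) for 1 < y₁ < x₁/2, and 0 otherwise. Then ∫_{R^n} Z₄(t,x,y) dy ≤ C·t^{-2}·x₁^{-1} for all t > 0, with C depending only on n and c. -/

import Mathlib

open Real MeasureTheory

private lemma sqrt_exp_eq (x : ℝ) : Real.sqrt (Real.exp x) = Real.exp (x / 2) := by
  rw [show Real.exp x = (Real.exp (x / 2)) ^ 2 by
    rw [sq, ← Real.exp_add, add_halves], Real.sqrt_sq (Real.exp_pos _).le]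

private lemma rpow_neg_three_halves {z : ℝ} (hz : 0 < z) :
    z ^ (-(3 : ℝ) / 2) = (z * Real.sqrt z)⁻¹ := by
  rw [show (-(3 : ℝ) / 2) = -((3 : ℝ) / 2) by ring, Real.rpow_neg hz.le]
  congr 1
  rw [show ((3 : ℝ) / 2) = 1 + 1 / 2 by norm_num, Real.rpow_add hz, Real.rpow_one,
    ← Real.sqrt_eq_rpow]

private lemma rpow_neg_five_halves {z : ℝ} (hz : 0 < z) :
    z ^ (-(5 : ℝ) / 2) = (z ^ 2 * Real.sqrt z)⁻¹ := by
  rw [show (-(5 : ℝ) / 2) = -((5 : ℝ) / 2) by ring, Real.rpow_neg hz.le]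
  congr 1
  rw [show ((5 : ℝ) / 2) = (2 : ℕ) + 1 / 2 by norm_num, Real.rpow_add hz,
    ← Real.sqrt_eq_rpow, Real.rpow_natCast]

private lemma rpow_neg_two_eq {t : ℝ} (ht : 0 < t) : t ^ (-2 : ℝ) = (t ^ 2)⁻¹ := by
  rw [show (-2 : ℝ) = -((2 : ℕ) : ℝ) by norm_num, Real.rpow_neg ht.le, Real.rpow_natCast]

private lemma one_dim (c : ℝ) (hc : 0 < c) (x₁ : ℝ) (hx₁ : 0 < x₁) (t : ℝ) (ht : 0 < t) :
    (∫ y : ℝ, (if 1 < y ∧ y < x₁ / 2 then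
        (t / (x₁ * y)) * (Real.log (x₁ / y)) ^ (-(5 : ℝ) / 2)
          * Real.exp (-c * t ^ 2 / Real.log (x₁ / y)) else 0))
      ≤ 2 * c ^ (-(3 : ℝ) / 2) * t ^ (-2 : ℝ) * x₁⁻¹ := by
  have hrhs : (0:ℝ) < 2 * c ^ (-(3 : ℝ) / 2) * t ^ (-2 : ℝ) * x₁⁻¹ := by positivity
  rcases le_or_gt x₁ 2 with h2 | h2
  · have hz : ∀ y : ℝ, (if 1 < y ∧ y < x₁ / 2 then
        (t / (x₁ * y)) * (Real.log (x₁ / y)) ^ (-(5 : ℝ) / 2)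
          * Real.exp (-c * t ^ 2 / Real.log (x₁ / y)) else 0) = 0 := by
      intro y
      rw [if_neg]
      rintro ⟨h1, h2'⟩
      linarith
    rw [show (∫ y : ℝ, (if 1 < y ∧ y < x₁ / 2 then
        (t / (x₁ * y)) * (Real.log (x₁ / y)) ^ (-(5 : ℝ) / 2)
          * Real.exp (-c * t ^ 2 / Real.log (x₁ / y)) else 0)) = 0 by
      simp only [hz, integral_zero]]
    exact hrhs.le
  -- main case : x₁ > 2
  set b : ℝ := x₁ / 2 with hb_def
  have hb1 : (1:ℝ) < b := by rw [hb_def]; linarith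
  set a : ℝ := c * t ^ 2 with ha_def
  have ha : 0 < a := by positivity
  have hsa : 0 < Real.sqrt a := Real.sqrt_pos.mpr ha
  have hlog2 : 0 < Real.log 2 := Real.log_pos one_lt_two
  have hmem : ∀ y ∈ Set.Icc (1:ℝ) b, 0 < y ∧ Real.log 2 ≤ Real.log x₁ - Real.log y := by
    intro y hy
    have hy0 : 0 < y := lt_of_lt_of_le one_pos hy.1
    refine ⟨hy0, ?_⟩
    have h1 : Real.log y ≤ Real.log b := Real.log_le_log hy0 hy.2
    have h2' : Real.log b = Real.log x₁ - Real.log 2 := by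
      rw [hb_def, Real.log_div (ne_of_gt hx₁) two_ne_zero]
    linarith
  -- the integrand on the interval
  set φ : ℝ → ℝ := fun y => t / (x₁ * y) * (Real.log x₁ - Real.log y) ^ (-(5 : ℝ) / 2)
      * Real.exp (-c * t ^ 2 / (Real.log x₁ - Real.log y)) with hφ_def
  set ψ : ℝ → ℝ := fun y => (t / x₁) * (Real.sqrt a)⁻¹
      * (y⁻¹ / (Real.log x₁ - Real.log y) ^ 2)
      * Real.exp ((-a / 2) * (Real.log x₁ - Real.log y)⁻¹) with hψ_def
  set F : ℝ → ℝ := fun y => -(2 * (t / x₁) * (a * Real.sqrt a)⁻¹)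
      * Real.exp ((-a / 2) * (Real.log x₁ - Real.log y)⁻¹) with hF_def
  -- Step 1 : reduce to interval integral of φ
  have step1 : (∫ y : ℝ, (if 1 < y ∧ y < x₁ / 2 then
        (t / (x₁ * y)) * (Real.log (x₁ / y)) ^ (-(5 : ℝ) / 2)
          * Real.exp (-c * t ^ 2 / Real.log (x₁ / y)) else 0))
      = ∫ y in (1:ℝ)..b, φ y := by
    rw [intervalIntegral.integral_of_le hb1.le, MeasureTheory.integral_Ioc_eq_integral_Ioo,
      ← MeasureTheory.integral_indicator measurableSet_Ioo]
    congr 1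
    funext y
    rw [Set.indicator_apply]
    simp only [Set.mem_Ioo]
    by_cases h : 1 < y ∧ y < b
    · rw [if_pos h, if_pos h, hφ_def]
      have hy0 : 0 < y := lt_trans one_pos h.1
      rw [Real.log_div (ne_of_gt hx₁) (ne_of_gt hy0)]
    · rw [if_neg h, if_neg h]
  rw [step1]
  -- continuity facts
  have hIcc : Set.uIcc (1:ℝ) b = Set.Icc 1 b := Set.uIcc_of_le hb1.le
  have hLc : ContinuousOn (fun y : ℝ => Real.log x₁ - Real.log y) (Set.Icc 1 b) :=
    continuousOn_const.sub (Real.continuousOn_log.mono fun y hy =>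
      (ne_of_gt (hmem y hy).1 : y ≠ 0))
  have hLne : ∀ y ∈ Set.Icc (1:ℝ) b, Real.log x₁ - Real.log y ≠ 0 := fun y hy =>
    ne_of_gt (lt_of_lt_of_le hlog2 (hmem y hy).2)
  have hyc : ContinuousOn (fun y : ℝ => y) (Set.Icc (1:ℝ) b) := continuousOn_id
  have hφc : ContinuousOn φ (Set.Icc 1 b) := by
    rw [hφ_def]
    refine ContinuousOn.mul (ContinuousOn.mul ?_ ?_) ?_
    · exact continuousOn_const.div (continuousOn_const.mul hyc) fun y hy =>
        mul_ne_zero (ne_of_gt hx₁) (ne_of_gt (hmem y hy).1)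
    · exact hLc.rpow_const fun y hy => Or.inl (hLne y hy)
    · exact (continuousOn_const.div hLc hLne).rexp
  have hψc : ContinuousOn ψ (Set.Icc 1 b) := by
    rw [hψ_def]
    refine ContinuousOn.mul (ContinuousOn.mul continuousOn_const ?_) ?_
    · exact (hyc.inv₀ fun y hy => ne_of_gt (hmem y hy).1).div (hLc.pow 2)
        fun y hy => pow_ne_zero 2 (hLne y hy)
    · exact (continuousOn_const.mul (hLc.inv₀ hLne)).rexp
  have hφint : IntervalIntegrable φ volume 1 b :=
    (hφc.mono (by rw [hIcc])).intervalIntegrable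
  have hψint : IntervalIntegrable ψ volume 1 b :=
    (hψc.mono (by rw [hIcc])).intervalIntegrable
  -- derivative
  have hderiv : ∀ y ∈ Set.Icc (1:ℝ) b, HasDerivAt F (ψ y) y := by
    intro y hy
    obtain ⟨hy0, hD⟩ := hmem y hy
    have hD0 : 0 < Real.log x₁ - Real.log y := lt_of_lt_of_le hlog2 hD
    have h1 : HasDerivAt (fun y : ℝ => Real.log x₁ - Real.log y) (0 - y⁻¹) y :=
      (hasDerivAt_const y (Real.log x₁)).sub (Real.hasDerivAt_log (ne_of_gt hy0))
    have h3 : HasDerivAt (fun y : ℝ => (Real.log x₁ - Real.log y)⁻¹)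
        (-(0 - y⁻¹) / (Real.log x₁ - Real.log y) ^ 2) y := h1.inv (ne_of_gt hD0)
    have h4 := h3.const_mul (-a / 2)
    have h5 := (h4.exp).const_mul (-(2 * (t / x₁) * (a * Real.sqrt a)⁻¹))
    rw [hF_def, hψ_def]
    refine h5.congr_deriv ?_
    have hane : a ≠ 0 := ne_of_gt ha
    have hsane : Real.sqrt a ≠ 0 := ne_of_gt hsa
    have hyne : y ≠ 0 := ne_of_gt hy0
    have hDne : (Real.log x₁ - Real.log y) ≠ 0 := ne_of_gt hD0
    have hsq : Real.sqrt a * Real.sqrt a = a := Real.mul_self_sqrt ha.le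
    field_simp
    ring_nf
  have hFTC : ∫ y in (1:ℝ)..b, ψ y = F b - F 1 :=
    intervalIntegral.integral_eq_sub_of_hasDerivAt
      (fun y hy => hderiv y (by rwa [hIcc] at hy)) hψint
  -- pointwise bound φ ≤ ψ on [1, b]
  have hpt : ∀ y ∈ Set.Icc (1:ℝ) b, φ y ≤ ψ y := by
    intro y hy
    obtain ⟨hy0, hD⟩ := hmem y hy
    have hD0 : 0 < Real.log x₁ - Real.log y := lt_of_lt_of_le hlog2 hD
    rw [hφ_def, hψ_def]
    simp only
    set D : ℝ := Real.log x₁ - Real.log y with hD_def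
    have hsD : 0 < Real.sqrt D := Real.sqrt_pos.mpr hD0
    rw [rpow_neg_five_halves hD0]
    have key : Real.sqrt a * Real.exp (-a / 2 * D⁻¹) ≤ Real.sqrt D := by
      have h1 : a / D ≤ Real.exp (a / D) := by
        have := Real.add_one_le_exp (a / D); linarith
      have h2 : Real.sqrt (a / D) ≤ Real.exp (a / D / 2) := by
        rw [← sqrt_exp_eq]
        exact Real.sqrt_le_sqrt h1
      have h3 : Real.sqrt a = Real.sqrt D * Real.sqrt (a / D) := by
        rw [← Real.sqrt_mul hD0.le, mul_div_cancel₀ _ (ne_of_gt hD0)]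
      calc Real.sqrt a * Real.exp (-a / 2 * D⁻¹)
          = Real.sqrt D * Real.sqrt (a / D) * Real.exp (-a / 2 * D⁻¹) := by rw [h3]
        _ ≤ Real.sqrt D * Real.exp (a / D / 2) * Real.exp (-a / 2 * D⁻¹) := by
            gcongr
        _ = Real.sqrt D := by
            rw [mul_assoc, ← Real.exp_add, show a / D / 2 + -a / 2 * D⁻¹ = 0 by
              field_simp; ring, Real.exp_zero, mul_one]
    have hexp : (Real.sqrt D)⁻¹ * Real.exp (-c * t ^ 2 / D)
        ≤ (Real.sqrt a)⁻¹ * Real.exp (-a / 2 * D⁻¹) := by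
      have heq : Real.exp (-c * t ^ 2 / D)
          = Real.exp (-a / 2 * D⁻¹) * Real.exp (-a / 2 * D⁻¹) := by
        rw [← Real.exp_add, ha_def]
        congr 1
        field_simp
        ring
      have hE : Real.exp (-a / 2 * D⁻¹) ≤ Real.sqrt D * (Real.sqrt a)⁻¹ := by
        rw [mul_comm] at key
        rw [← le_div_iff₀ hsa] at key
        rw [div_eq_mul_inv] at key
        exact key
      rw [heq, inv_mul_le_iff₀ hsD, ← mul_assoc]
      exact mul_le_mul_of_nonneg_right hE (Real.exp_pos _).le
    calc t / (x₁ * y) * (D ^ 2 * Real.sqrt D)⁻¹ * Real.exp (-c * t ^ 2 / D)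
        = (t / (x₁ * y) * (D ^ 2)⁻¹) * ((Real.sqrt D)⁻¹ * Real.exp (-c * t ^ 2 / D)) := by
          rw [mul_inv]; ring
      _ ≤ (t / (x₁ * y) * (D ^ 2)⁻¹) * ((Real.sqrt a)⁻¹ * Real.exp (-a / 2 * D⁻¹)) := by
          have hpos : (0:ℝ) ≤ t / (x₁ * y) * (D ^ 2)⁻¹ := by positivity
          exact mul_le_mul_of_nonneg_left hexp hpos
      _ = t / x₁ * (Real.sqrt a)⁻¹ * (y⁻¹ / D ^ 2) * Real.exp (-a / 2 * D⁻¹) := by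
          ring
  have hK : 0 < 2 * (t / x₁) * (a * Real.sqrt a)⁻¹ := by positivity
  calc ∫ y in (1:ℝ)..b, φ y ≤ ∫ y in (1:ℝ)..b, ψ y :=
        intervalIntegral.integral_mono_on hb1.le hφint hψint hpt
    _ = F b - F 1 := hFTC
    _ ≤ 2 * (t / x₁) * (a * Real.sqrt a)⁻¹ := by
        have h1 : F b ≤ 0 := by
          rw [hF_def]
          simp only
          nlinarith [Real.exp_pos (-a / 2 * (Real.log x₁ - Real.log b)⁻¹)]
        have hlogx₁ : 0 < Real.log x₁ := Real.log_pos (by linarith)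
        have h2 : -(2 * (t / x₁) * (a * Real.sqrt a)⁻¹) ≤ F 1 := by
          rw [hF_def]
          simp only [Real.log_one, sub_zero]
          have hE1 : Real.exp (-a / 2 * (Real.log x₁)⁻¹) ≤ 1 := by
            rw [Real.exp_le_one_iff]
            have : 0 < (Real.log x₁)⁻¹ := inv_pos.mpr hlogx₁
            nlinarith
          nlinarith
        linarith
    _ = 2 * c ^ (-(3:ℝ) / 2) * t ^ (-2:ℝ) * x₁⁻¹ := by
        rw [rpow_neg_three_halves hc, rpow_neg_two_eq ht, ha_def]
        rw [show Real.sqrt (c * t ^ 2) = Real.sqrt c * t by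
          rw [Real.sqrt_mul hc.le, Real.sqrt_sq ht.le]]
        have hsc : 0 < Real.sqrt c := Real.sqrt_pos.mpr hc
        field_simp

theorem stmt_10 (m : ℕ) (c : ℝ) (hc : 0 < c) :
    ∃ C > 0, ∀ x₁ : ℝ, 0 < x₁ → ∀ t : ℝ, 0 < t →
      ∫ y : ℝ × EuclideanSpace ℝ (Fin m),
          (if 1 < y.1 ∧ y.1 < x₁ / 2 then
            (t / (x₁ * y.1)) * (Real.log (x₁ / y.1)) ^ (-(5 : ℝ) / 2)
              * Real.exp (-c * t ^ 2 / Real.log (x₁ / y.1))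
              * Real.exp (-c * ‖y.2‖ ^ 2)
          else 0)
        ≤ C * t ^ (-2 : ℝ) * x₁⁻¹ := by
  set Cg : ℝ := (π / c) ^ ((Module.finrank ℝ (EuclideanSpace ℝ (Fin m)) : ℝ) / 2) with hCg_def
  have hCg : 0 < Cg := Real.rpow_pos_of_pos (div_pos Real.pi_pos hc) _
  have hc32 : 0 < c ^ (-(3 : ℝ) / 2) := Real.rpow_pos_of_pos hc _
  refine ⟨2 * c ^ (-(3 : ℝ) / 2) * Cg, by positivity, ?_⟩
  intro x₁ hx₁ t ht
  have hsplit : (∫ y : ℝ × EuclideanSpace ℝ (Fin m),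
          (if 1 < y.1 ∧ y.1 < x₁ / 2 then
            (t / (x₁ * y.1)) * (Real.log (x₁ / y.1)) ^ (-(5 : ℝ) / 2)
              * Real.exp (-c * t ^ 2 / Real.log (x₁ / y.1))
              * Real.exp (-c * ‖y.2‖ ^ 2)
          else 0))
      = (∫ y₁ : ℝ, (if 1 < y₁ ∧ y₁ < x₁ / 2 then
            (t / (x₁ * y₁)) * (Real.log (x₁ / y₁)) ^ (-(5 : ℝ) / 2)
              * Real.exp (-c * t ^ 2 / Real.log (x₁ / y₁)) else 0))
        * ∫ y₂ : EuclideanSpace ℝ (Fin m), Real.exp (-c * ‖y₂‖ ^ 2) := by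
    rw [← MeasureTheory.integral_prod_mul
      (μ := (volume : Measure ℝ)) (ν := (volume : Measure (EuclideanSpace ℝ (Fin m))))
      (f := fun y₁ : ℝ => (if 1 < y₁ ∧ y₁ < x₁ / 2 then
            (t / (x₁ * y₁)) * (Real.log (x₁ / y₁)) ^ (-(5 : ℝ) / 2)
              * Real.exp (-c * t ^ 2 / Real.log (x₁ / y₁)) else 0))
      (g := fun y₂ : EuclideanSpace ℝ (Fin m) => Real.exp (-c * ‖y₂‖ ^ 2)),
      ← MeasureTheory.Measure.volume_eq_prod]
    congr 1
    funext y
    by_cases h : 1 < y.1 ∧ y.1 < x₁ / 2 <;> simp [h]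
  rw [hsplit, GaussianFourier.integral_rexp_neg_mul_sq_norm hc, ← hCg_def]
  calc _ ≤ (2 * c ^ (-(3 : ℝ) / 2) * t ^ (-2 : ℝ) * x₁⁻¹) * Cg :=
        mul_le_mul_of_nonneg_right (one_dim c hc x₁ hx₁ t ht) hCg.le
    _ = 2 * c ^ (-(3 : ℝ) / 2) * Cg * t ^ (-2 : ℝ) * x₁⁻¹ := by ring
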